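/- For all real 3 ≤ P ≤ R, Σ_{R < m ≤ RP, m P-smooth} τ(m)/m ≤ R^{−1/log P} Σ_{m P-smooth} τ(m)/m^{1 − 1/log P} ≪ R^{−1/log P} log² P, with an absolute implied constant, where m runs over P-smooth natural numbers and τ(m) is the number of divisors of m. -/

import Mathlib

open scoped Classical

/-- `τ(n)`: the number of divisors of `n`. -/
def tau (n : ℕ) : ℕ := n.divisors.card

open Finset Nat MeasureTheory

lemma tau_mul_coprime {m n : ℕ} (h : m.Coprime n) : tau (m * n) = tau m * tau n :=
  Nat.Coprime.card_divisors_mul h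

lemma tau_prime_pow {p : ℕ} (hp : p.Prime) (i : ℕ) : tau (p ^ i) = i + 1 := by
  have := ArithmeticFunction.sigma_zero_apply_prime_pow (i := i) hp
  rwa [ArithmeticFunction.sigma_zero_apply] at this

lemma tau_one : tau 1 = 1 := by simp [tau]
lemma tau_zero : tau 0 = 0 := by simp [tau]

noncomputable def fE (σ : ℝ) : ℕ → ℝ := fun m => (tau m : ℝ) / (m : ℝ) ^ σ

section euler

variable {σ : ℝ} (hσ : 0 < σ)

lemma fE_one : fE σ 1 = 1 := by simp [fE, tau_one]

lemma fE_zero : fE σ 0 = 0 := by simp [fE, tau_zero]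

lemma fE_nonneg (m : ℕ) : 0 ≤ fE σ m := by
  unfold fE; positivity

lemma fE_mul {m n : ℕ} (h : m.Coprime n) : fE σ (m * n) = fE σ m * fE σ n := by
  rcases eq_or_ne m 0 with rfl | hm
  · rw [Nat.coprime_zero_left] at h
    subst h
    simp [fE_zero]
  rcases eq_or_ne n 0 with rfl | hn
  · rw [Nat.coprime_zero_right] at h
    subst h
    simp [fE_zero]
  unfold fE
  rw [tau_mul_coprime h]
  push_cast
  rw [Real.mul_rpow (by positivity) (by positivity)]
  field_simp

lemma fE_pp_eq {p : ℕ} (hp : p.Prime) (e : ℕ) :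
    fE σ (p ^ e) = ((e:ℝ) + 1) * ((p:ℝ) ^ (-σ)) ^ e := by
  have hp0 : (0:ℝ) < p := by exact_mod_cast hp.pos
  unfold fE
  rw [tau_prime_pow hp]
  push_cast
  rw [← Real.rpow_natCast (p:ℝ) e, ← Real.rpow_natCast ((p:ℝ) ^ (-σ)) e,
    ← Real.rpow_mul hp0.le, ← Real.rpow_mul hp0.le,
    show -σ * (e:ℝ) = -((e:ℝ) * σ) from by ring, Real.rpow_neg hp0.le, div_eq_mul_inv]

include hσ in
lemma y_mem {p : ℕ} (hp : p.Prime) : 0 ≤ (p:ℝ) ^ (-σ) ∧ (p:ℝ) ^ (-σ) < 1 := by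
  have hp1 : (1:ℝ) < p := by exact_mod_cast hp.one_lt
  exact ⟨Real.rpow_nonneg (by positivity) _,
    Real.rpow_lt_one_of_one_lt_of_neg hp1 (by linarith)⟩

include hσ in
lemma fE_pp_summable' {p : ℕ} (hp : p.Prime) :
    Summable (fun e : ℕ => ((e:ℝ) + 1) * ((p:ℝ) ^ (-σ)) ^ e) := by
  obtain ⟨hy0, hy1⟩ := y_mem hσ hp
  have hnorm : ‖(p:ℝ) ^ (-σ)‖ < 1 := by rwa [Real.norm_eq_abs, abs_of_nonneg hy0]
  have h1 := summable_pow_mul_geometric_of_norm_lt_one (R := ℝ) 1 hnorm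
  have h2 : Summable (fun e : ℕ => ((p:ℝ) ^ (-σ)) ^ e) := summable_geometric_of_lt_one hy0 hy1
  exact (h1.add h2).congr (fun e => by push_cast; ring)

include hσ in
lemma fE_pp_summable {p : ℕ} (hp : p.Prime) :
    Summable (fun e : ℕ => ‖fE σ (p ^ e)‖) := by
  apply (fE_pp_summable' hσ hp).congr
  intro e
  rw [← fE_pp_eq hp e, Real.norm_eq_abs, abs_of_nonneg (fE_nonneg _)]

include hσ in
lemma fE_pp_tsum {p : ℕ} (hp : p.Prime) :
    ∑' e : ℕ, fE σ (p ^ e) = ((1 - (p:ℝ) ^ (-σ))⁻¹) ^ 2 := by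
  obtain ⟨hy0, hy1⟩ := y_mem hσ hp
  set y := (p:ℝ) ^ (-σ) with hy
  have hnorm : ‖y‖ < 1 := by rwa [Real.norm_eq_abs, abs_of_nonneg hy0]
  have h1 : Summable (fun e : ℕ => (e:ℝ) * y ^ e) := by
    have := summable_pow_mul_geometric_of_norm_lt_one (R := ℝ) 1 hnorm
    exact this.congr (fun e => by push_cast; ring)
  have h2 : Summable (fun e : ℕ => y ^ e) := summable_geometric_of_lt_one hy0 hy1
  have hts : ∑' e : ℕ, fE σ (p ^ e) = (∑' e : ℕ, (e:ℝ) * y ^ e) + ∑' e : ℕ, y ^ e := by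
    rw [← Summable.tsum_add h1 h2]
    apply tsum_congr
    intro e
    rw [fE_pp_eq hp e]
    ring
  rw [hts, tsum_coe_mul_geometric_of_norm_lt_one hnorm, tsum_geometric_of_lt_one hy0 hy1]
  have h1y : 1 - y ≠ 0 := by intro h; nlinarith
  field_simp
  ring

include hσ in
lemma euler_smooth (N : ℕ) :
    Summable (fun m : N.smoothNumbers ↦ ‖fE σ m‖) ∧
      HasSum (fun m : N.smoothNumbers ↦ fE σ m)
        (∏ p ∈ N.primesBelow, ((1 - (p:ℝ) ^ (-σ))⁻¹) ^ 2) := by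
  have key := EulerProduct.summable_and_hasSum_smoothNumbers_prod_primesBelow_tsum
    (f := fE σ) fE_one (fun {m n} h => fE_mul h) (fun {p} hp => fE_pp_summable hσ hp) N
  refine ⟨key.1, ?_⟩
  have : ∏ p ∈ N.primesBelow, ∑' (n : ℕ), fE σ (p ^ n)
      = ∏ p ∈ N.primesBelow, ((1 - (p:ℝ) ^ (-σ))⁻¹) ^ 2 :=
    Finset.prod_congr rfl fun p hp => fE_pp_tsum hσ (Nat.prime_of_mem_primesBelow hp)
  rw [← this]
  exact key.2

end euler

lemma cheb (N : ℕ) : ∑ p ∈ N.primesBelow, Real.log p ≤ N * Real.log 4 := by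
  rcases N with _ | M
  · simp [Nat.primesBelow_zero]
  have h1 : ∑ p ∈ (M+1).primesBelow, Real.log p = Real.log (primorial M) := by
    rw [primorial, Nat.cast_prod, Real.log_prod]
    · rfl
    · intro p hp
      exact_mod_cast (Nat.prime_of_mem_primesBelow hp).pos.ne'
  rw [h1]
  calc Real.log (primorial M) ≤ Real.log ((4:ℕ)^M) := by
        apply Real.log_le_log (by exact_mod_cast primorial_pos M)
        exact_mod_cast primorial_le_4_pow M
    _ = M * Real.log 4 := by
        push_cast
        rw [Real.log_pow]
    _ ≤ (M+1 : ℕ) * Real.log 4 := by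
        have : (0:ℝ) ≤ Real.log 4 := Real.log_nonneg (by norm_num)
        push_cast
        nlinarith

lemma legendre_ge {p N : ℕ} (hp : p.Prime) : N / p ≤ (N !).factorization p := by
  haveI : Fact p.Prime := ⟨hp⟩
  rw [Nat.factorization_def _ hp,
    padicValNat_factorial (b := Nat.log p N + 2) (by omega)]
  have h1 : (1:ℕ) ∈ Finset.Ico 1 (Nat.log p N + 2) := by simp
  simpa using Finset.single_le_sum (f := fun i => N / p ^ i)
    (fun i _ => Nat.zero_le _) h1

lemma mertens1 (N : ℕ) : ∑ p ∈ N.primesBelow, Real.log p / p ≤ Real.log N + Real.log 4 := by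
  rcases Nat.eq_zero_or_pos N with rfl | hN
  · simp [Nat.primesBelow_zero]
    positivity
  have hlogfac : ∑ p ∈ N.primesBelow, ((N / p : ℕ) : ℝ) * Real.log p ≤ Real.log (N !) := by
    have hlog : Real.log (N !) =
        ∑ q ∈ (Finset.range (N ! + 1)).filter Nat.Prime,
          (padicValNat q (N !) : ℝ) * Real.log q := by
      conv_lhs => rw [← Nat.prod_pow_prime_padicValNat (N !) (Nat.factorial_ne_zero N) (N ! + 1)
        (Nat.lt_succ_self _)]
      rw [Nat.cast_prod, Real.log_prod]
      · exact Finset.sum_congr rfl fun q hq => by rw [Nat.cast_pow, Real.log_pow]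
      · intro q hq
        have hq' := (Finset.mem_filter.mp hq).2
        exact_mod_cast (pow_pos hq'.pos _).ne'
    rw [hlog]
    calc ∑ p ∈ N.primesBelow, ((N / p : ℕ) : ℝ) * Real.log p
        ≤ ∑ p ∈ N.primesBelow, (padicValNat p (N !) : ℝ) * Real.log p := by
          apply Finset.sum_le_sum
          intro p hp
          have hp' := Nat.prime_of_mem_primesBelow hp
          have hlp : (0:ℝ) ≤ Real.log p := Real.log_nonneg (by exact_mod_cast hp'.one_lt.le)
          have := legendre_ge (N := N) hp'
          rw [Nat.factorization_def _ hp'] at this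
          exact mul_le_mul_of_nonneg_right (by exact_mod_cast this) hlp
      _ ≤ ∑ q ∈ (Finset.range (N ! + 1)).filter Nat.Prime,
          (padicValNat q (N !) : ℝ) * Real.log q := by
          apply Finset.sum_le_sum_of_subset_of_nonneg
          · intro p hp
            rw [Nat.primesBelow, Finset.mem_filter] at hp
            rw [Finset.mem_filter, Finset.mem_range]
            refine ⟨?_, hp.2⟩
            have : p < N := Finset.mem_range.mp hp.1
            have := N.self_le_factorial
            omega
          · intro q hq _
            have hq' := (Finset.mem_filter.mp hq).2
            have : (0:ℝ) ≤ Real.log q := Real.log_nonneg (by exact_mod_cast hq'.one_lt.le)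
            positivity
  have hNR : (0:ℝ) < N := by exact_mod_cast hN
  have hfacpow : Real.log (N !) ≤ N * Real.log N := by
    calc Real.log (N !) ≤ Real.log ((N:ℕ)^N) := by
          apply Real.log_le_log (by exact_mod_cast N.factorial_pos)
          exact_mod_cast N.factorial_le_pow
      _ = N * Real.log N := by push_cast; rw [Real.log_pow]
  calc ∑ p ∈ N.primesBelow, Real.log p / p
      ≤ ∑ p ∈ N.primesBelow, ((((N / p : ℕ)):ℝ) * Real.log p + Real.log p) / N := by
        apply Finset.sum_le_sum
        intro p hp
        have hp' := Nat.prime_of_mem_primesBelow hp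
        have hp0 : (0:ℝ) < p := by exact_mod_cast hp'.pos
        have hlp : (0:ℝ) ≤ Real.log p := Real.log_nonneg (by exact_mod_cast hp'.one_lt.le)
        have hcast : (N:ℝ) ≤ p * ((N/p : ℕ):ℝ) + p := by
          have h1 : N ≤ p * (N / p) + p := by
            have := Nat.div_add_mod N p
            have := Nat.mod_lt N hp'.pos
            omega
          exact_mod_cast h1
        rw [div_le_div_iff₀ hp0 hNR]
        nlinarith [mul_le_mul_of_nonneg_left hcast hlp]
    _ = (∑ p ∈ N.primesBelow, (((N / p : ℕ)):ℝ) * Real.log p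
          + ∑ p ∈ N.primesBelow, Real.log p) / N := by
        rw [← Finset.sum_add_distrib, Finset.sum_div]
    _ ≤ (N * Real.log N + N * Real.log 4) / N := by
        gcongr
        exact hlogfac.trans hfacpow
        exact cheb N
    _ = Real.log N + Real.log 4 := by field_simp

noncomputable def cP : ℕ → ℝ := fun k => if k.Prime then Real.log k / k else 0


lemma cP_nonneg (k : ℕ) : 0 ≤ cP k := by
  unfold cP
  split
  · rename_i h
    have h1 : (0:ℝ) ≤ Real.log k := Real.log_nonneg (by exact_mod_cast h.one_lt.le)
    positivity
  · exact le_refl _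

lemma sum_cP_eq (M : ℕ) :
    ∑ k ∈ Finset.Icc 0 M, cP k = ∑ p ∈ (M+1).primesBelow, Real.log p / p := by
  rw [Nat.primesBelow, Finset.sum_filter, ← Nat.Ico_zero_eq_range, ← Finset.Ico_add_one_right_eq_Icc]
  rfl

lemma S_bound {t : ℝ} (ht : 3/2 ≤ t) :
    ∑ k ∈ Finset.Icc 0 ⌊t⌋₊, cP k ≤ Real.log t + Real.log 8 := by
  rw [sum_cP_eq]
  have h1 := mertens1 (⌊t⌋₊ + 1)
  have h2 : ((⌊t⌋₊ + 1 : ℕ) : ℝ) ≤ 2 * t := by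
    have := Nat.floor_le (by linarith : (0:ℝ) ≤ t)
    push_cast
    linarith
  have h3 : Real.log ((⌊t⌋₊ + 1 : ℕ) : ℝ) ≤ Real.log (2*t) :=
    Real.log_le_log (by positivity) h2
  have h4 : Real.log (2*t) = Real.log 2 + Real.log t := by
    rw [Real.log_mul (by norm_num) (by linarith)]
  have h8 : Real.log 8 = Real.log 2 + Real.log 4 := by
    rw [← Real.log_mul (by norm_num) (by norm_num)]
    norm_num
  push_cast at h1 h3 ⊢
  linarith

noncomputable def fA : ℝ → ℝ := fun t => (Real.log t)⁻¹

lemma fA_hasDeriv {t : ℝ} (ht : 3/2 ≤ t) :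
    HasDerivAt fA (-(t⁻¹) / (Real.log t)^2) t := by
  have h0 : t ≠ 0 := by linarith
  have hl : Real.log t ≠ 0 := (Real.log_pos (by linarith)).ne'
  exact (Real.hasDerivAt_log h0).inv hl

lemma fA_deriv_eq {t : ℝ} (ht : 3/2 ≤ t) :
    deriv fA t = -(t⁻¹) / (Real.log t)^2 := (fA_hasDeriv ht).deriv

lemma contOn_g2 {b : ℝ} : ContinuousOn
    (fun t => (Real.log t + Real.log 8) / (t * (Real.log t)^2)) (Set.Icc (3/2 : ℝ) b) := by
  apply ContinuousOn.div
  · exact ((Real.continuousOn_log.mono (by intro x hx; simp; intro h; rw [h] at hx; simp at hx; linarith [hx.1])).add continuousOn_const)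
  · exact continuousOn_id.mul (((Real.continuousOn_log.mono (by intro x hx; simp; intro h; rw [h] at hx; simp at hx; linarith [hx.1]))).pow 2)
  · intro t ht
    have h1 : (3/2 : ℝ) ≤ t := ht.1
    have h0 : t ≠ 0 := by linarith
    have hl : Real.log t ≠ 0 := (Real.log_pos (by linarith)).ne'
    positivity

lemma abel_step (b : ℝ) (hb : 3 ≤ b) :
    ∑ k ∈ Finset.Ioc ⌊(3/2:ℝ)⌋₊ ⌊b⌋₊, fA k * cP k =
      fA b * (∑ k ∈ Finset.Icc 0 ⌊b⌋₊, cP k)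
        - fA (3/2) * (∑ k ∈ Finset.Icc 0 ⌊(3/2:ℝ)⌋₊, cP k)
        - ∫ t in Set.Ioc (3/2 : ℝ) b, deriv fA t * (∑ k ∈ Finset.Icc 0 ⌊t⌋₊, cP k) := by
  apply sum_mul_eq_sub_sub_integral_mul cP (by norm_num) (by linarith)
  · intro t ht
    have h1 : (3/2:ℝ) ≤ t := ht.1
    have h0 : t ≠ 0 := by linarith
    have hl : Real.log t ≠ 0 := (Real.log_pos (by linarith)).ne'
    exact (Real.differentiableAt_log h0).inv hl
  · apply IntegrableOn.congr_fun (f := fun t => -(t⁻¹) / (Real.log t)^2)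
    · apply ContinuousOn.integrableOn_Icc
      apply ContinuousOn.div
      · exact (continuousOn_id.inv₀ (fun t ht => by simpa using (by linarith [ht.1] : (0:ℝ) < t).ne')).neg
      · exact ((Real.continuousOn_log.mono (by intro x hx; simp; intro h; rw [h] at hx; simp at hx; linarith [hx.1]))).pow 2
      · intro t ht
        have hl : Real.log t ≠ 0 := (Real.log_pos (by linarith [ht.1])).ne'
        positivity
    · intro t ht
      exact (fA_deriv_eq ht.1).symm
    · exact measurableSet_Icc

noncomputable def GA : ℝ → ℝ := fun t => Real.log (Real.log t) - Real.log 8 * (Real.log t)⁻¹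

lemma GA_hasDeriv {t : ℝ} (ht : 3/2 ≤ t) :
    HasDerivAt GA ((Real.log t + Real.log 8) / (t * (Real.log t)^2)) t := by
  have h0 : t ≠ 0 := by linarith
  have hlpos : 0 < Real.log t := Real.log_pos (by linarith)
  have hl : Real.log t ≠ 0 := hlpos.ne'
  have h1 : HasDerivAt (fun t => Real.log (Real.log t)) ((Real.log t)⁻¹ * t⁻¹) t :=
    (Real.hasDerivAt_log hl).comp t (Real.hasDerivAt_log h0)
  have h2 : HasDerivAt (fun t => Real.log 8 * (Real.log t)⁻¹)
      (Real.log 8 * (-(t⁻¹)/(Real.log t)^2)) t :=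
    ((Real.hasDerivAt_log h0).inv hl).const_mul _
  have h3 : HasDerivAt GA ((Real.log t)⁻¹ * t⁻¹ - Real.log 8 * (-(t⁻¹)/(Real.log t)^2)) t :=
    h1.sub h2
  convert h3 using 1
  field_simp
  ring

lemma integral_eval {b : ℝ} (hb : 3 ≤ b) :
    ∫ t in Set.Ioc (3/2:ℝ) b, (Real.log t + Real.log 8)/(t * (Real.log t)^2)
      = GA b - GA (3/2) := by
  rw [← intervalIntegral.integral_of_le (by linarith)]
  apply intervalIntegral.integral_eq_sub_of_hasDerivAt
  · intro t ht
    rw [Set.uIcc_of_le (by linarith)] at ht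
    exact GA_hasDeriv ht.1
  · apply ContinuousOn.intervalIntegrable
    rw [Set.uIcc_of_le (by linarith)]
    exact contOn_g2

lemma floor_three_half : ⌊(3/2:ℝ)⌋₊ = 1 := by
  rw [Nat.floor_eq_iff (by norm_num)]
  norm_num

noncomputable def Cmer : ℝ :=
  1 + Real.log 8 / Real.log 3 - Real.log (Real.log (3/2)) + Real.log 8 / Real.log (3/2)

lemma mertens2 (b : ℝ) (hb : 3 ≤ b) :
    ∑ p ∈ (⌊b⌋₊+1).primesBelow, (1:ℝ)/p ≤ Real.log (Real.log b) + Cmer := by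
  have hsum_eq : ∑ p ∈ (⌊b⌋₊+1).primesBelow, (1:ℝ)/p
      = ∑ k ∈ Finset.Ioc ⌊(3/2:ℝ)⌋₊ ⌊b⌋₊, fA k * cP k := by
    rw [floor_three_half, Nat.primesBelow]
    have hflt : (Finset.range (⌊b⌋₊+1)).filter Nat.Prime
        = (Finset.Ioc 1 ⌊b⌋₊).filter Nat.Prime := by
      ext q
      simp only [Finset.mem_filter, Finset.mem_range, Finset.mem_Ioc]
      constructor
      · rintro ⟨h1, h2⟩; exact ⟨⟨h2.one_lt, by omega⟩, h2⟩
      · rintro ⟨h1, h2⟩; exact ⟨by omega, h2⟩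
    rw [hflt, Finset.sum_filter]
    apply Finset.sum_congr rfl
    intro p _
    by_cases hp' : p.Prime
    · have hl : Real.log p ≠ 0 := (Real.log_pos (by exact_mod_cast hp'.one_lt)).ne'
      have hp0 : (p:ℝ) ≠ 0 := by exact_mod_cast hp'.pos.ne'
      simp only [fA, cP, if_pos hp']
      field_simp
    · simp [fA, cP, hp']
  have key := abel_step b hb
  have hS32 : ∑ k ∈ Finset.Icc 0 ⌊(3/2:ℝ)⌋₊, cP k = 0 := by
    rw [floor_three_half, show (Finset.Icc 0 1 : Finset ℕ) = {0, 1} from rfl,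
      Finset.sum_insert (by norm_num), Finset.sum_singleton]
    simp [cP]
  -- bound the integral term
  have hIbd : -(∫ t in Set.Ioc (3/2 : ℝ) b, deriv fA t * (∑ k ∈ Finset.Icc 0 ⌊t⌋₊, cP k))
      ≤ GA b - GA (3/2) := by
    rw [← integral_eval hb, ← integral_neg]
    apply integral_mono_of_nonneg
    · filter_upwards [ae_restrict_mem measurableSet_Ioc] with t ht
      have h32 : (3/2:ℝ) ≤ t := le_of_lt (by linarith [ht.1])
      have hlpos : 0 < Real.log t := Real.log_pos (by linarith)
      have ht0 : (0:ℝ) < t := by linarith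
      have hSnn : 0 ≤ ∑ k ∈ Finset.Icc 0 ⌊t⌋₊, cP k :=
        Finset.sum_nonneg fun k _ => cP_nonneg k
      simp only [Pi.zero_apply, fA_deriv_eq h32]
      have : -(-(t⁻¹) / Real.log t ^ 2 * ∑ k ∈ Finset.Icc 0 ⌊t⌋₊, cP k)
          = (t⁻¹ / Real.log t ^ 2) * ∑ k ∈ Finset.Icc 0 ⌊t⌋₊, cP k := by ring
      rw [this]
      positivity
    · exact (contOn_g2.integrableOn_Icc).mono_set Set.Ioc_subset_Icc_self
    · filter_upwards [ae_restrict_mem measurableSet_Ioc] with t ht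
      have h32 : (3/2:ℝ) ≤ t := le_of_lt (by linarith [ht.1])
      have hlpos : 0 < Real.log t := Real.log_pos (by linarith)
      have ht0 : (0:ℝ) < t := by linarith
      rw [fA_deriv_eq h32]
      have hSb := S_bound h32
      have hfac : (0:ℝ) ≤ t⁻¹ / Real.log t ^ 2 := by positivity
      have : -(-(t⁻¹) / Real.log t ^ 2 * ∑ k ∈ Finset.Icc 0 ⌊t⌋₊, cP k)
          = (t⁻¹ / Real.log t ^ 2) * ∑ k ∈ Finset.Icc 0 ⌊t⌋₊, cP k := by ring
      rw [this]
      calc (t⁻¹ / Real.log t ^ 2) * ∑ k ∈ Finset.Icc 0 ⌊t⌋₊, cP k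
          ≤ (t⁻¹ / Real.log t ^ 2) * (Real.log t + Real.log 8) :=
            mul_le_mul_of_nonneg_left hSb hfac
        _ = (Real.log t + Real.log 8) / (t * Real.log t ^ 2) := by
            field_simp
  -- assemble
  have hb32 : (3/2:ℝ) ≤ b := by linarith
  have hlb : 0 < Real.log b := Real.log_pos (by linarith)
  have hl3 : 0 < Real.log 3 := Real.log_pos (by norm_num)
  have hl32 : 0 < Real.log (3/2:ℝ) := Real.log_pos (by norm_num)
  have hl8 : 0 ≤ Real.log 8 := Real.log_nonneg (by norm_num)
  have hfb : fA b * (∑ k ∈ Finset.Icc 0 ⌊b⌋₊, cP k)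
      ≤ 1 + Real.log 8 / Real.log 3 := by
    have hSb := S_bound hb32
    have hfAnn : 0 ≤ fA b := by simp only [fA]; positivity
    calc fA b * (∑ k ∈ Finset.Icc 0 ⌊b⌋₊, cP k)
        ≤ fA b * (Real.log b + Real.log 8) := mul_le_mul_of_nonneg_left hSb hfAnn
      _ = 1 + Real.log 8 / Real.log b := by
          simp only [fA]; field_simp
      _ ≤ 1 + Real.log 8 / Real.log 3 := by
          have : Real.log 3 ≤ Real.log b := Real.log_le_log (by norm_num) hb
          gcongr
  have hGA : GA b - GA (3/2) ≤ Real.log (Real.log b) - Real.log (Real.log (3/2))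
      + Real.log 8 / Real.log (3/2) := by
    simp only [GA]
    have h1 : 0 ≤ Real.log 8 * (Real.log b)⁻¹ := by positivity
    have h2 : Real.log 8 * (Real.log (3/2:ℝ))⁻¹ = Real.log 8 / Real.log (3/2) :=
      (div_eq_mul_inv _ _).symm
    linarith
  rw [hsum_eq, key, hS32, mul_zero, sub_zero]
  unfold Cmer
  linarith

lemma one_lt_log_three : 1 < Real.log 3 := by
  rw [Real.lt_log_iff_exp_lt (by norm_num)]
  exact Real.exp_one_lt_d9.trans_le (by norm_num)

noncomputable def etaC : ℝ := (2:ℝ) ^ (-(1 - 1/Real.log 3))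

lemma sigma0_pos : (0:ℝ) < 1 - 1/Real.log 3 := by
  have h := one_lt_log_three
  rw [sub_pos, div_lt_one (by linarith)]
  linarith

lemma etaC_lt_one : etaC < 1 :=
  Real.rpow_lt_one_of_one_lt_of_neg one_lt_two (by linarith [sigma0_pos])

lemma etaC_nonneg : 0 ≤ etaC := Real.rpow_nonneg (by norm_num) _

lemma sum_inv_sq_le (N : ℕ) : ∑ n ∈ Finset.Ico 2 N, (1:ℝ)/(n:ℝ)^2 ≤ 1 := by
  rw [Finset.sum_Ico_eq_sum_range]
  calc ∑ k ∈ Finset.range (N - 2), (1:ℝ)/((2 + k : ℕ):ℝ)^2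
      ≤ ∑ k ∈ Finset.range (N - 2), ((1:ℝ)/((k:ℝ)+1) - 1/((k:ℝ)+2)) := by
        apply Finset.sum_le_sum
        intro k _
        have h1 : (0:ℝ) < (k:ℝ) + 1 := by positivity
        have h2 : (0:ℝ) < (k:ℝ) + 2 := by positivity
        rw [div_sub_div _ _ (by positivity) (by positivity)]
        rw [div_le_div_iff₀ (by positivity) (by positivity)]
        push_cast
        ring_nf
        nlinarith
    _ = 1/((0:ℝ)+1) - 1/(((N-2 : ℕ):ℝ)+1) := by
        have := Finset.sum_range_sub' (f := fun k : ℕ => (1:ℝ)/((k:ℝ)+1)) (n := N - 2)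
        push_cast at this ⊢
        convert this using 2 <;> push_cast <;> ring
    _ ≤ 1 := by
        have : (0:ℝ) ≤ 1/(((N-2 : ℕ):ℝ)+1) := by positivity
        linarith

lemma primes_sum_inv_sq_le (N : ℕ) : ∑ p ∈ N.primesBelow, (1:ℝ)/(p:ℝ)^2 ≤ 1 := by
  refine le_trans ?_ (sum_inv_sq_le N)
  apply Finset.sum_le_sum_of_subset_of_nonneg
  · intro p hp
    have h1 := Nat.prime_of_mem_primesBelow hp
    have h2 := Nat.lt_of_mem_primesBelow hp
    rw [Finset.mem_Ico]
    exact ⟨h1.two_le, h2⟩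
  · intro n _ _
    positivity


noncomputable def CT : ℝ :=
  Cmer + Real.exp 1 * (1 + Real.log 8) + (Real.exp 1)^2 / (1 - etaC)

section Pfacts

variable {P : ℝ} (hP : 3 ≤ P)

include hP

lemma one_lt_logP : 1 < Real.log P :=
  lt_of_lt_of_le one_lt_log_three (Real.log_le_log (by norm_num) hP)

lemma sigma_ge : 1 - 1/Real.log 3 ≤ 1 - 1/Real.log P := by
  have h3 := one_lt_log_three
  have hp := one_lt_logP hP
  have : 1/Real.log P ≤ 1/Real.log 3 :=
    one_div_le_one_div_of_le (by linarith) (Real.log_le_log (by norm_num) hP)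
  linarith

lemma sigma_pos : 0 < 1 - 1/Real.log P := lt_of_lt_of_le sigma0_pos (sigma_ge hP)

-- x_p facts
lemma xp_le_eta {p : ℕ} (hp : p.Prime) :
    (p:ℝ) ^ (-(1 - 1/Real.log P)) ≤ etaC := by
  have h2p : (2:ℝ) ≤ p := by exact_mod_cast hp.two_le
  calc (p:ℝ) ^ (-(1 - 1/Real.log P)) ≤ (2:ℝ) ^ (-(1 - 1/Real.log P)) :=
        Real.rpow_le_rpow_of_nonpos (by norm_num) h2p (by linarith [sigma_pos hP])
    _ ≤ etaC := Real.rpow_le_rpow_of_exponent_le (by norm_num)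
        (by linarith [sigma_ge hP])

lemma xp_le {p : ℕ} (hp : p.Prime) (hpP : (p:ℝ) ≤ P) :
    (p:ℝ) ^ (-(1 - 1/Real.log P)) ≤
      1/p + Real.exp 1 * (Real.log p / p) / Real.log P ∧
    (p:ℝ) ^ (-(1 - 1/Real.log P)) ≤ Real.exp 1 / p := by
  have hp0 : (0:ℝ) < p := by exact_mod_cast hp.pos
  have hlP : 1 < Real.log P := one_lt_logP hP
  set t : ℝ := Real.log p / Real.log P with ht
  have ht0 : 0 ≤ t := by
    apply div_nonneg (Real.log_nonneg (by exact_mod_cast hp.one_lt.le)) (by linarith)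
  have ht1 : t ≤ 1 := by
    rw [div_le_one (by linarith)]
    exact Real.log_le_log hp0 hpP
  have hexp_t : Real.exp t ≤ 1 + Real.exp 1 * t := by
    have h1 := Real.add_one_le_exp (-t)
    have h2 : Real.exp (-t) = (Real.exp t)⁻¹ := Real.exp_neg t
    have h3 : Real.exp t ≤ Real.exp 1 := Real.exp_le_exp.mpr ht1
    have h4 : 0 < Real.exp t := Real.exp_pos t
    rw [h2] at h1
    have h5 : Real.exp t * (-t + 1) ≤ 1 := by
      calc Real.exp t * (-t + 1) ≤ Real.exp t * (Real.exp t)⁻¹ :=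
            mul_le_mul_of_nonneg_left h1 h4.le
        _ = 1 := mul_inv_cancel₀ h4.ne'
    nlinarith
  have hxp : (p:ℝ) ^ (-(1 - 1/Real.log P)) = (1/p) * Real.exp t := by
    rw [show -(1 - 1/Real.log P) = (-1) + 1/Real.log P from by ring,
      Real.rpow_add hp0, Real.rpow_neg_one,
      Real.rpow_def_of_pos hp0]
    rw [ht, one_div, div_eq_mul_inv, one_mul]
    rw [div_eq_mul_inv]
  constructor
  · rw [hxp]
    calc (1/(p:ℝ)) * Real.exp t ≤ (1/(p:ℝ)) * (1 + Real.exp 1 * t) :=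
          mul_le_mul_of_nonneg_left hexp_t (by positivity)
      _ = 1/p + Real.exp 1 * (Real.log p / p) / Real.log P := by
          rw [ht]; field_simp
  · rw [hxp]
    have h3 : Real.exp t ≤ Real.exp 1 := Real.exp_le_exp.mpr ht1
    calc (1/(p:ℝ)) * Real.exp t ≤ (1/(p:ℝ)) * Real.exp 1 :=
          mul_le_mul_of_nonneg_left h3 (by positivity)
      _ = Real.exp 1 / p := by ring

end Pfacts


lemma prod_bound {P : ℝ} (hP : 3 ≤ P) :
    ∏ p ∈ (⌊P⌋₊+1).primesBelow, (1 - (p:ℝ) ^ (-(1 - 1/Real.log P)))⁻¹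
      ≤ Real.exp CT * Real.log P := by
  have hlP := one_lt_logP hP
  have hη1 := etaC_lt_one
  have hη0 := etaC_nonneg
  have hexp1 : (0:ℝ) < Real.exp 1 := Real.exp_pos 1
  have hl8 : (0:ℝ) ≤ Real.log 8 := Real.log_nonneg (by norm_num)
  set N := ⌊P⌋₊ + 1 with hNdef
  have hpP : ∀ p ∈ N.primesBelow, (p:ℝ) ≤ P := by
    intro p hp
    have h1 : p < N := Nat.lt_of_mem_primesBelow hp
    have h2 : p ≤ ⌊P⌋₊ := by omega
    calc (p:ℝ) ≤ (⌊P⌋₊:ℝ) := by exact_mod_cast h2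
      _ ≤ P := Nat.floor_le (by linarith)
  have hfac_pos : ∀ p ∈ N.primesBelow, 0 < 1 - (p:ℝ) ^ (-(1 - 1/Real.log P)) := by
    intro p hp
    have := xp_le_eta hP (Nat.prime_of_mem_primesBelow hp)
    linarith
  have hprod_pos : 0 < ∏ p ∈ N.primesBelow, (1 - (p:ℝ) ^ (-(1 - 1/Real.log P)))⁻¹ :=
    Finset.prod_pos fun p hp => inv_pos.mpr (hfac_pos p hp)
  have hlog_prod : Real.log (∏ p ∈ N.primesBelow, (1 - (p:ℝ) ^ (-(1 - 1/Real.log P)))⁻¹)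
      = ∑ p ∈ N.primesBelow, Real.log ((1 - (p:ℝ) ^ (-(1 - 1/Real.log P)))⁻¹) :=
    Real.log_prod fun p hp => (inv_pos.mpr (hfac_pos p hp)).ne'
  have hterm : ∀ p ∈ N.primesBelow,
      Real.log ((1 - (p:ℝ) ^ (-(1 - 1/Real.log P)))⁻¹)
        ≤ 1/p + (Real.exp 1 / Real.log P) * (Real.log p / p)
          + ((Real.exp 1)^2/(1 - etaC)) * (1/(p:ℝ)^2) := by
    intro p hp
    have hprime := Nat.prime_of_mem_primesBelow hp
    have hp0 : (0:ℝ) < p := by exact_mod_cast hprime.pos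
    set x := (p:ℝ) ^ (-(1 - 1/Real.log P)) with hx
    have hx0 : 0 ≤ x := Real.rpow_nonneg hp0.le _
    have hxη : x ≤ etaC := xp_le_eta hP hprime
    have h1x : 0 < 1 - x := hfac_pos p hp
    obtain ⟨hb1, hb2⟩ := xp_le hP hprime (hpP p hp)
    have hlog : Real.log ((1-x)⁻¹) ≤ x/(1-x) := by
      have := Real.log_le_sub_one_of_pos (inv_pos.mpr h1x)
      calc Real.log ((1-x)⁻¹) ≤ (1-x)⁻¹ - 1 := this
        _ = x/(1-x) := by field_simp; ring
    have hsplit : x/(1-x) ≤ x + x^2/(1 - etaC) := by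
      have heq : x/(1-x) = x + x^2/(1-x) := by field_simp; ring
      have hcmp : x^2/(1-x) ≤ x^2/(1-etaC) :=
        div_le_div_of_nonneg_left (by positivity) (by linarith) (by linarith)
      linarith
    have hx2 : x^2 ≤ (Real.exp 1)^2 * (1/(p:ℝ)^2) := by
      have : x^2 ≤ (Real.exp 1/p)^2 := by nlinarith
      calc x^2 ≤ (Real.exp 1/p)^2 := this
        _ = (Real.exp 1)^2 * (1/(p:ℝ)^2) := by field_simp
    calc Real.log ((1-x)⁻¹) ≤ x + x^2/(1-etaC) := hlog.trans hsplit
      _ ≤ (1/p + Real.exp 1 * (Real.log p / p) / Real.log P)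
          + ((Real.exp 1)^2 * (1/(p:ℝ)^2))/(1-etaC) := by
          apply add_le_add hb1
          exact (div_le_div_iff_of_pos_right (by linarith : (0:ℝ) < 1 - etaC)).mpr hx2
      _ = 1/p + (Real.exp 1 / Real.log P) * (Real.log p / p)
          + ((Real.exp 1)^2/(1 - etaC)) * (1/(p:ℝ)^2) := by ring
  have hsum : ∑ p ∈ N.primesBelow, Real.log ((1 - (p:ℝ) ^ (-(1 - 1/Real.log P)))⁻¹)
      ≤ Real.log (Real.log P) + CT := by
    calc ∑ p ∈ N.primesBelow, Real.log ((1 - (p:ℝ) ^ (-(1 - 1/Real.log P)))⁻¹)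
        ≤ ∑ p ∈ N.primesBelow, (1/(p:ℝ) + (Real.exp 1 / Real.log P) * (Real.log p / p)
          + ((Real.exp 1)^2/(1 - etaC)) * (1/(p:ℝ)^2)) := Finset.sum_le_sum hterm
      _ = (∑ p ∈ N.primesBelow, 1/(p:ℝ))
          + (Real.exp 1 / Real.log P) * (∑ p ∈ N.primesBelow, Real.log p / p)
          + ((Real.exp 1)^2/(1 - etaC)) * (∑ p ∈ N.primesBelow, 1/(p:ℝ)^2) := by
          rw [Finset.sum_add_distrib, Finset.sum_add_distrib, Finset.mul_sum, Finset.mul_sum]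
      _ ≤ (Real.log (Real.log P) + Cmer)
          + (Real.exp 1 / Real.log P) * (Real.log P + Real.log 2 + Real.log 4)
          + ((Real.exp 1)^2/(1 - etaC)) * 1 := by
          have hm2 := mertens2 P hP
          have hm1 := mertens1 N
          have hNle : (N:ℝ) ≤ 2 * P := by
            have h1 : (⌊P⌋₊:ℝ) ≤ P := Nat.floor_le (by linarith)
            have : (N:ℝ) = (⌊P⌋₊:ℝ) + 1 := by push_cast [hNdef]; ring
            linarith
          have hlogN : Real.log N ≤ Real.log P + Real.log 2 := by
            calc Real.log N ≤ Real.log (2*P) := by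
                  apply Real.log_le_log (by positivity) hNle
              _ = Real.log 2 + Real.log P := Real.log_mul (by norm_num) (by linarith)
              _ = Real.log P + Real.log 2 := by ring
          have hsq := primes_sum_inv_sq_le N
          have hc1 : (0:ℝ) ≤ Real.exp 1 / Real.log P := by positivity
          have hc2 : (0:ℝ) ≤ (Real.exp 1)^2/(1 - etaC) := by
            apply div_nonneg (by positivity) (by linarith)
          refine add_le_add (add_le_add hm2 ?_) ?_
          · exact mul_le_mul_of_nonneg_left (by linarith) hc1
          · exact mul_le_mul_of_nonneg_left hsq hc2
      _ ≤ Real.log (Real.log P) + CT := by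
          unfold CT
          have h8 : Real.log 2 + Real.log 4 = Real.log 8 := by
            rw [← Real.log_mul (by norm_num) (by norm_num)]; norm_num
          have hkey : (Real.exp 1 / Real.log P) * (Real.log P + Real.log 2 + Real.log 4)
              ≤ Real.exp 1 * (1 + Real.log 8) := by
            rw [div_mul_eq_mul_div, div_le_iff₀ (by linarith)]
            have : Real.log 8 ≤ Real.log 8 * Real.log P := by nlinarith
            nlinarith [h8]
          nlinarith [hkey]
  calc ∏ p ∈ N.primesBelow, (1 - (p:ℝ) ^ (-(1 - 1/Real.log P)))⁻¹
      = Real.exp (Real.log (∏ p ∈ N.primesBelow, (1 - (p:ℝ) ^ (-(1 - 1/Real.log P)))⁻¹)) :=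
        (Real.exp_log hprod_pos).symm
    _ ≤ Real.exp (Real.log (Real.log P) + CT) := by
        apply Real.exp_le_exp.mpr
        rw [hlog_prod]
        exact hsum
    _ = Real.exp CT * Real.log P := by
        rw [Real.exp_add, Real.exp_log (by linarith)]
        ring


/-- For all real `3 ≤ P ≤ R`:
`Σ_{R < m ≤ RP, m P-smooth} τ(m)/m ≤ R^{−1/log P} Σ_{m P-smooth} τ(m)/m^{1−1/log P}
≪ R^{−1/log P} log² P`, with an absolute implied constant, where `m` runs over
`P`-smooth natural numbers. -/
theorem statement_17 :
    ∃ C : ℝ, 0 < C ∧ ∀ P R : ℝ, 3 ≤ P → P ≤ R →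
      (∑ m ∈ (Finset.Icc 1 ⌊R * P⌋₊).filter
          (fun m : ℕ => R < (m : ℝ) ∧ ∀ p ∈ m.primeFactors, (p : ℝ) ≤ P),
          (tau m : ℝ) / m)
        ≤ R ^ (-(1 / Real.log P)) *
          ∑' m : ℕ, (if 1 ≤ m ∧ ∀ p ∈ m.primeFactors, (p : ℝ) ≤ P then
            (tau m : ℝ) / (m : ℝ) ^ (1 - 1 / Real.log P) else 0) ∧
      R ^ (-(1 / Real.log P)) *
          (∑' m : ℕ, (if 1 ≤ m ∧ ∀ p ∈ m.primeFactors, (p : ℝ) ≤ P then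
            (tau m : ℝ) / (m : ℝ) ^ (1 - 1 / Real.log P) else 0))
        ≤ C * R ^ (-(1 / Real.log P)) * (Real.log P) ^ 2 := by
  refine ⟨Real.exp (2 * CT), Real.exp_pos _, ?_⟩
  intro P R h3P hPR
  have hP0 : (0:ℝ) < P := by linarith
  have hR3 : (3:ℝ) ≤ R := le_trans h3P hPR
  have hR0 : (0:ℝ) < R := by linarith
  have hσ : 0 < 1 - 1/Real.log P := sigma_pos h3P
  have hlogP : 1 < Real.log P := one_lt_logP h3P
  set σ : ℝ := 1 - 1/Real.log P with hσdef
  set N : ℕ := ⌊P⌋₊ + 1 with hNdef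
  have hset : ∀ m : ℕ, (1 ≤ m ∧ ∀ p ∈ m.primeFactors, (p:ℝ) ≤ P) ↔ m ∈ N.smoothNumbers := by
    intro m
    rw [Nat.mem_smoothNumbers]
    constructor
    · rintro ⟨h1, h2⟩
      refine ⟨by omega, fun p hp => ?_⟩
      have hpp : p.Prime := Nat.prime_of_mem_primeFactorsList hp
      have hpf : p ∈ m.primeFactors := by
        rw [Nat.mem_primeFactors]
        exact ⟨hpp, Nat.dvd_of_mem_primeFactorsList hp, by omega⟩
      have hle : p ≤ ⌊P⌋₊ := Nat.le_floor (h2 p hpf)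
      omega
    · rintro ⟨h1, h2⟩
      refine ⟨by omega, fun p hp => ?_⟩
      rw [Nat.mem_primeFactors] at hp
      have hlt : p < N := h2 p ((Nat.mem_primeFactorsList h1).mpr ⟨hp.1, hp.2.1⟩)
      have hle : p ≤ ⌊P⌋₊ := by omega
      calc (p:ℝ) ≤ (⌊P⌋₊:ℝ) := by exact_mod_cast hle
        _ ≤ P := Nat.floor_le hP0.le
  have heuler := euler_smooth hσ N
  have hsub_summable : Summable (fun m : N.smoothNumbers => fE σ m) := heuler.2.summable
  set g : ℕ → ℝ := fun m => if 1 ≤ m ∧ ∀ p ∈ m.primeFactors, (p:ℝ) ≤ P then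
    (tau m : ℝ) / (m:ℝ)^σ else 0 with hgdef
  have hg_eq : g = Set.indicator (N.smoothNumbers) (fE σ) := by
    funext m
    rw [Set.indicator_apply]
    by_cases h : m ∈ N.smoothNumbers
    · rw [if_pos h, hgdef]
      simp only
      rw [if_pos ((hset m).mpr h)]
      rfl
    · rw [if_neg h, hgdef]
      simp only
      rw [if_neg (fun hc => h ((hset m).mp hc))]
  have hg_nonneg : ∀ m, 0 ≤ g m := by
    intro m
    rw [hgdef]
    simp only
    split
    · positivity
    · exact le_refl 0
  have hg_summable : Summable g := by
    rw [hg_eq]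
    exact summable_subtype_iff_indicator.mp hsub_summable
  have hg_tsum_eq : ∑' m : ℕ, g m = ∑' m : N.smoothNumbers, fE σ m := by
    rw [hg_eq, ← _root_.tsum_subtype]
  have htsum_val : ∑' m : N.smoothNumbers, fE σ m
      = ∏ p ∈ N.primesBelow, ((1 - (p:ℝ)^(-σ))⁻¹) ^ 2 := heuler.2.tsum_eq
  have hprodnn : 0 ≤ ∏ p ∈ N.primesBelow, (1 - (p:ℝ)^(-σ))⁻¹ := by
    apply Finset.prod_nonneg
    intro p hp
    apply inv_nonneg.mpr
    have h1 := xp_le_eta h3P (Nat.prime_of_mem_primesBelow hp)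
    have h2 := etaC_lt_one
    linarith
  have hg_tsum_le : ∑' m : ℕ, g m ≤ Real.exp (2 * CT) * (Real.log P)^2 := by
    rw [hg_tsum_eq, htsum_val, Finset.prod_pow]
    calc (∏ p ∈ N.primesBelow, (1 - (p:ℝ)^(-σ))⁻¹) ^ 2
        ≤ (Real.exp CT * Real.log P) ^ 2 := by
          apply pow_le_pow_left₀ hprodnn (prod_bound h3P)
      _ = Real.exp (2 * CT) * (Real.log P)^2 := by
          rw [mul_pow, sq (Real.exp CT), ← Real.exp_add]
          ring_nf
  have hRpow_nn : 0 ≤ R ^ (-(1/Real.log P)) := Real.rpow_nonneg hR0.le _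
  constructor
  · -- first inequality
    apply le_trans (Finset.sum_le_sum (g := fun m : ℕ => R ^ (-(1/Real.log P)) * g m) ?_)
    · rw [← Finset.mul_sum]
      apply mul_le_mul_of_nonneg_left ?_ hRpow_nn
      exact Summable.sum_le_tsum _ (fun m _ => hg_nonneg m) hg_summable
    · intro m hm
      rw [Finset.mem_filter, Finset.mem_Icc] at hm
      obtain ⟨⟨h1m, _⟩, hRm, hsm⟩ := hm
      have hm0 : (0:ℝ) < m := by exact_mod_cast h1m
      have hgm : g m = (tau m : ℝ) / (m:ℝ)^σ := by
        rw [hgdef]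
        simp only
        rw [if_pos ⟨h1m, hsm⟩]
      have hsplit : (tau m : ℝ)/m
          = ((tau m : ℝ)/(m:ℝ)^σ) * (m:ℝ)^(-(1/Real.log P)) := by
        rw [show ((tau m : ℝ)/(m:ℝ)^σ) * (m:ℝ)^(-(1/Real.log P))
            = (tau m:ℝ) * ((m:ℝ)^σ * (m:ℝ)^(1/Real.log P))⁻¹ from by
          rw [Real.rpow_neg hm0.le, mul_inv]; ring]
        rw [← Real.rpow_add hm0, show σ + 1/Real.log P = 1 from by rw [hσdef]; ring,
          Real.rpow_one, div_eq_mul_inv]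
      rw [hsplit]
      show _ ≤ R ^ (-(1/Real.log P)) * g m
      rw [hgm]
      have hmono : (m:ℝ)^(-(1/Real.log P)) ≤ R^(-(1/Real.log P)) :=
        Real.rpow_le_rpow_of_nonpos hR0 hRm.le
          (neg_nonpos.mpr (by positivity))
      calc ((tau m : ℝ)/(m:ℝ)^σ) * (m:ℝ)^(-(1/Real.log P))
          ≤ ((tau m : ℝ)/(m:ℝ)^σ) * R^(-(1/Real.log P)) := by
            apply mul_le_mul_of_nonneg_left hmono (by positivity)
        _ = R ^ (-(1/Real.log P)) * ((tau m : ℝ)/(m:ℝ)^σ) := by ring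
  · -- second inequality
    calc R ^ (-(1/Real.log P)) * (∑' m : ℕ, g m)
        ≤ R ^ (-(1/Real.log P)) * (Real.exp (2*CT) * (Real.log P)^2) :=
          mul_le_mul_of_nonneg_left hg_tsum_le hRpow_nn
      _ = Real.exp (2*CT) * R ^ (-(1/Real.log P)) * (Real.log P)^2 := by ring
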